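/- arXiv:1105.6176 — 2 statements merged into one kernel-verified Lean document; each statement's English description precedes it below -/
import Mathlib

section
/- Let p1 ∈ [0,1], λ1, λ2 ≥ 0, N ≥ 1 and 1 ≤ i1 ≤ N. For all real z1 > 0 and z2 > 0, the family (PHD(Δ1,Δ2) · z1^{Δ1} · z2^{Δ2}) indexed by (Δ1,Δ2) ∈ ℤ² is summable and Σ_{(Δ1,Δ2)∈ℤ²} PHD(Δ1,Δ2) · z1^{Δ1} · z2^{Δ2} = exp(λ1·N·(z1−1)) · exp(λ2·N·(z2−1)) · [ Σ_{m=0}^{i1−1} (N choose m)·(1−p1)^m·p1^{N−m}·z1^{−m}·z2^{m} + ( Σ_{m=i1}^{N} (N choose m)·(1−p1)^m·p1^{N−m} )·z1^{−i1}·z2^{i1} ]. (Probability generating function of the half-duplex inter-session state transition when node S1 transmits N coded packets.) -/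
/-- Probability that `x` packets arrive in `b` time slots under a Poisson
arrival process of rate `lam` per slot. -/
noncomputable def arr (lam : ℝ) (b : ℕ) (x : ℤ) : ℝ :=
  if 0 ≤ x then Real.exp (-(lam * b)) * (lam * b) ^ x.toNat / (Nat.factorial x.toNat) else 0

/-- Probability of zero successful transmissions in one slot when the queue holds `i` packets. -/
noncomputable def d0 (i : ℕ) (p : ℝ) : ℝ := if i = 0 then 1 else p

/-- Probability of one successful transmission in one slot when the queue holds `i` packets. -/
noncomputable def d1 (i : ℕ) (p : ℝ) : ℝ := if i = 0 then 0 else 1 - p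

/-- Distribution of the number of useful packets delivered from `S1` to `S2`
when `S1` transmits `N` coded packets and `i1` dof are missing: binomial
probabilities for `m < i1` and the binomial upper tail lumped at `m = i1`. -/
noncomputable def dHD (p1 : ℝ) (N i1 m : ℕ) : ℝ :=
  if m < i1 then (N.choose m : ℝ) * (1 - p1) ^ m * p1 ^ (N - m)
  else ∑ k ∈ Finset.Icc i1 N, (N.choose k : ℝ) * (1 - p1) ^ k * p1 ^ (N - k)

/-- Half-duplex inter-session transition probability `PHD(Δ1, Δ2)` when node
`S1` transmits `N` coded packets from state `(i1, i2, S1)`. -/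
noncomputable def PHD (p1 lam1 lam2 : ℝ) (N i1 : ℕ) (Δ : ℤ × ℤ) : ℝ :=
  ∑ m ∈ Finset.range (i1 + 1),
    dHD p1 N i1 m * arr lam1 N (Δ.1 + (m : ℤ)) * arr lam2 N (Δ.2 - (m : ℤ))

lemma arr_nonneg (lam : ℝ) (hl : 0 ≤ lam) (b : ℕ) (x : ℤ) : 0 ≤ arr lam b x := by
  unfold arr; split
  · have : (0:ℝ) ≤ lam * b := by positivity
    positivity
  · exact le_rfl

lemma hasSum_exp_real (x : ℝ) : HasSum (fun n : ℕ => x ^ n / n.factorial) (Real.exp x) := by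
  rw [Real.exp_eq_exp_ℝ]
  exact NormedSpace.expSeries_div_hasSum_exp x

/-- Key shift lemma: PGF of a shifted Poisson arrival distribution. -/
lemma arr_shift (lam : ℝ) (N : ℕ) (m : ℤ) (z : ℝ) (hz : 0 < z) :
    HasSum (fun x : ℤ => arr lam N (x + m) * z ^ x)
      (Real.exp (lam * N * (z - 1)) * z ^ (-m)) := by
  have hzne : z ≠ 0 := ne_of_gt hz
  have hinj : Function.Injective (fun n : ℕ => (n : ℤ) - m) := by
    intro a b h; simpa using h
  rw [← Function.Injective.hasSum_iff hinj]
  · have h := ((hasSum_exp_real (lam * N * z)).mul_left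
      (Real.exp (-(lam * N)) * z ^ (-m)))
    have harg : -(lam * N) + lam * N * z = lam * N * (z - 1) := by ring
    have hval : Real.exp (-(lam * N)) * z ^ (-m) * Real.exp (lam * N * z)
        = Real.exp (lam * N * (z - 1)) * z ^ (-m) := by
      rw [mul_right_comm, ← Real.exp_add, harg]
    rw [hval] at h
    convert h using 2 with n
    · rfl
    simp only [Function.comp, arr, sub_add_cancel]
    rw [if_pos (Int.natCast_nonneg n), Int.toNat_natCast, zpow_sub₀ hzne, zpow_natCast, mul_pow]
    field_simp
    rw [← zpow_add₀ hzne, add_neg_cancel, zpow_zero, one_mul, mul_pow, mul_pow]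
  · intro x hx
    have : x + m < 0 := by
      by_contra h
      push_neg at h
      apply hx
      exact ⟨(x + m).toNat, by simp [Int.toNat_of_nonneg h]⟩
    simp [arr, not_le.mpr this]

/-- PGF of the half-duplex inter-session state transition (Lemma 2). -/
theorem half_duplex_pgf (p1 lam1 lam2 : ℝ) (hp1 : p1 ∈ Set.Icc (0 : ℝ) 1)
    (hl1 : 0 ≤ lam1) (hl2 : 0 ≤ lam2) (N i1 : ℕ) (hN : 1 ≤ N)
    (hi1 : 1 ≤ i1) (hi1N : i1 ≤ N) (z1 z2 : ℝ) (hz1 : 0 < z1) (hz2 : 0 < z2) :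
    HasSum (fun Δ : ℤ × ℤ => PHD p1 lam1 lam2 N i1 Δ * z1 ^ Δ.1 * z2 ^ Δ.2)
      (Real.exp (lam1 * N * (z1 - 1)) * Real.exp (lam2 * N * (z2 - 1)) *
        (∑ m ∈ Finset.range i1,
            (N.choose m : ℝ) * (1 - p1) ^ m * p1 ^ (N - m) * z1 ^ (-(m : ℤ)) * z2 ^ (m : ℤ)
          + (∑ m ∈ Finset.Icc i1 N, (N.choose m : ℝ) * (1 - p1) ^ m * p1 ^ (N - m)) *
              z1 ^ (-(i1 : ℤ)) * z2 ^ (i1 : ℤ))) := by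
  set E1 := Real.exp (lam1 * N * (z1 - 1)) with hE1
  set E2 := Real.exp (lam2 * N * (z2 - 1)) with hE2
  -- Per-m HasSum over ℤ × ℤ
  have hterm : ∀ m ∈ Finset.range (i1 + 1),
      HasSum (fun Δ : ℤ × ℤ => dHD p1 N i1 m *
          (arr lam1 N (Δ.1 + (m : ℤ)) * z1 ^ Δ.1 * (arr lam2 N (Δ.2 - (m : ℤ)) * z2 ^ Δ.2)))
        (dHD p1 N i1 m * (E1 * z1 ^ (-(m : ℤ)) * (E2 * z2 ^ ((m : ℤ))))) := by
    intro m _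
    have h1 := arr_shift lam1 N (m : ℤ) z1 hz1
    have h2' := arr_shift lam2 N (-(m : ℤ)) z2 hz2
    rw [neg_neg] at h2'
    have h2 : HasSum (fun x : ℤ => arr lam2 N (x - (m : ℤ)) * z2 ^ x)
        (E2 * z2 ^ ((m : ℤ))) := by
      simpa [sub_eq_add_neg, hE2] using h2'
    have hsummable : Summable (fun Δ : ℤ × ℤ =>
        (arr lam1 N (Δ.1 + (m : ℤ)) * z1 ^ Δ.1) * (arr lam2 N (Δ.2 - (m : ℤ)) * z2 ^ Δ.2)) := by
      apply Summable.mul_of_nonneg h1.summable h2.summable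
      · intro x
        exact mul_nonneg (arr_nonneg lam1 hl1 N _) (le_of_lt (zpow_pos hz1 x))
      · intro x
        exact mul_nonneg (arr_nonneg lam2 hl2 N _) (le_of_lt (zpow_pos hz2 x))
    exact (h1.mul h2 hsummable).mul_left _
  have hsum := hasSum_sum hterm
  -- Identify the function
  have hfun : (fun Δ : ℤ × ℤ => ∑ m ∈ Finset.range (i1 + 1),
      dHD p1 N i1 m *
        (arr lam1 N (Δ.1 + (m : ℤ)) * z1 ^ Δ.1 * (arr lam2 N (Δ.2 - (m : ℤ)) * z2 ^ Δ.2)))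
      = (fun Δ : ℤ × ℤ => PHD p1 lam1 lam2 N i1 Δ * z1 ^ Δ.1 * z2 ^ Δ.2) := by
    funext Δ
    unfold PHD
    rw [Finset.sum_mul, Finset.sum_mul]
    exact Finset.sum_congr rfl fun m _ => by ring
  rw [hfun] at hsum
  -- Identify the value
  have hval : (∑ m ∈ Finset.range (i1 + 1),
      dHD p1 N i1 m * (E1 * z1 ^ (-(m : ℤ)) * (E2 * z2 ^ ((m : ℤ)))))
      = E1 * E2 *
        (∑ m ∈ Finset.range i1,
            (N.choose m : ℝ) * (1 - p1) ^ m * p1 ^ (N - m) * z1 ^ (-(m : ℤ)) * z2 ^ (m : ℤ)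
          + (∑ m ∈ Finset.Icc i1 N, (N.choose m : ℝ) * (1 - p1) ^ m * p1 ^ (N - m)) *
              z1 ^ (-(i1 : ℤ)) * z2 ^ (i1 : ℤ)) := by
    rw [Finset.sum_range_succ, mul_add, Finset.mul_sum]
    congr 1
    · refine Finset.sum_congr rfl fun m hm => ?_
      rw [Finset.mem_range] at hm
      rw [dHD, if_pos hm]
      ring
    · rw [dHD, if_neg (lt_irrefl i1)]
      ring
  rw [hval] at hsum
  exact hsum
end

section
/- Let p1, p2 ∈ [0,1], λ1, λ2 ≥ 0 and i1, i2 ∈ ℕ. Define for (Δ1,Δ2,Δ3) ∈ ℤ³ the intra-session transition probability conditioned on flow 1 being serviced: 𝒫(Δ1,Δ2,Δ3) = a(λ2,1,Δ3) · P₀(Δ1,Δ2 | (i1,i2)), where P₀ denotes the genie-aided inter-session transition probability with λ2 replaced by 0, i.e., P₀(Δ1,Δ2 | (i1,i2)) = d0(i1,p1)·a(λ1,1,Δ1)·( d0(i2,p2)·a(0,1,Δ2) + d1(i2,p2)·a(0,1,Δ2+1) ) + d1(i1,p1)·a(λ1,1,Δ1+1)·( d0(i2,p2)·a(0,1,Δ2−1)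 + d1(i2,p2)·a(0,1,Δ2) ). Then for all real z1, z2, z3 > 0 the family (𝒫(Δ1,Δ2,Δ3)·z1^{Δ1}·z2^{Δ2}·z3^{Δ3}) indexed by ℤ³ is summable and Σ_{(Δ1,Δ2,Δ3)∈ℤ³} 𝒫(Δ1,Δ2,Δ3)·z1^{Δ1}·z2^{Δ2}·z3^{Δ3} = exp(λ1·(z1−1)) · exp(λ2·(z3−1)) · (d0(i2,p2) + d1(i2,p2)·z2^{−1}) · (d0(i1,p1) + d1(i1,p1)·z2·z1^{−1}). -/
/-- Genie-aided inter-session transition probability `P(Δ1, Δ2 | (i1, i2))`. -/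
noncomputable def Ptrans (p1 p2 lam1 lam2 : ℝ) (i1 i2 : ℕ) (Δ : ℤ × ℤ) : ℝ :=
  d0 i1 p1 * arr lam1 1 Δ.1 *
      (d0 i2 p2 * arr lam2 1 Δ.2 + d1 i2 p2 * arr lam2 1 (Δ.2 + 1)) +
    d1 i1 p1 * arr lam1 1 (Δ.1 + 1) *
      (d0 i2 p2 * arr lam2 1 (Δ.2 - 1) + d1 i2 p2 * arr lam2 1 Δ.2)

/-- Intra-session transition probability conditioned on flow 1 being serviced
(event `A1`): `𝒫(Δ1,Δ2,Δ3) = a(λ2,1,Δ3) · P(Δ1,Δ2 | (i1,i2))|_{λ2 = 0}`. -/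
noncomputable def PintraA1 (p1 p2 lam1 lam2 : ℝ) (i1 i2 : ℕ) (Δ : ℤ × ℤ × ℤ) : ℝ :=
  arr lam2 1 Δ.2.2 * Ptrans p1 p2 lam1 0 i1 i2 (Δ.1, Δ.2.1)

lemma hasSum_mul_real {ι κ : Type*} {f : ι → ℝ} {g : κ → ℝ} {s t : ℝ}
    (hf : HasSum f s) (hg : HasSum g t) :
    HasSum (fun x : ι × κ => f x.1 * g x.2) (s * t) :=
  hf.mul hg (summable_mul_of_summable_norm (by simpa using hf.summable.abs)
    (by simpa using hg.summable.abs))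

lemma hasSum_arr (lam : ℝ) (z : ℝ) :
    HasSum (fun x : ℤ => arr lam 1 x * z ^ x) (Real.exp (lam * (z - 1))) := by
  have h1 : HasSum (fun n : ℕ => (lam * z) ^ n / (Nat.factorial n)) (Real.exp (lam * z)) := by
    rw [Real.exp_eq_exp_ℝ]
    exact NormedSpace.expSeries_div_hasSum_exp (lam * z)
  have h2 := h1.mul_left (Real.exp (-lam))
  have h3 : (fun n : ℕ => Real.exp (-lam) * ((lam * z) ^ n / (Nat.factorial n)))
      = (fun x : ℤ => arr lam 1 x * z ^ x) ∘ (fun n : ℕ => (n : ℤ)) := by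
    funext n
    simp only [Function.comp, arr, Int.toNat_natCast, Nat.cast_one, mul_one,
      Int.natCast_nonneg, if_true, zpow_natCast]
    rw [mul_pow]
    ring
  have hinj : Function.Injective (fun n : ℕ => (n : ℤ)) := fun a b h => by simpa using h
  have hzero : ∀ x : ℤ, x ∉ Set.range (fun n : ℕ => (n : ℤ)) → arr lam 1 x * z ^ x = 0 := by
    intro x hx
    have : ¬ (0 ≤ x) := by
      intro h
      exact hx ⟨x.toNat, by simp [Int.toNat_of_nonneg h]⟩
    simp [arr, this]
  have := (hinj.hasSum_iff hzero).mp (h3 ▸ h2)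
  convert this using 1
  rw [← Real.exp_add]; ring_nf

lemma hasSum_arr_shift (lam : ℝ) (z : ℝ) (hz : 0 < z) (k : ℤ) :
    HasSum (fun x : ℤ => arr lam 1 (x + k) * z ^ x) (Real.exp (lam * (z - 1)) * z ^ (-k)) := by
  have h := ((hasSum_arr lam z).mul_right (z ^ (-k)))
  have h2 := ((Equiv.addRight k).hasSum_iff).mpr h
  convert h2 using 1 <;> try rfl
  funext x
  simp only [Function.comp, Equiv.coe_addRight]
  rw [zpow_add₀ (ne_of_gt hz), zpow_neg]
  field_simp
  try ring

/-- PGF of the intra-session transition probability conditioned on flow 1 being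
serviced. -/
theorem intra_session_A1_pgf (p1 p2 lam1 lam2 : ℝ)
    (hp1 : p1 ∈ Set.Icc (0 : ℝ) 1) (hp2 : p2 ∈ Set.Icc (0 : ℝ) 1)
    (hl1 : 0 ≤ lam1) (hl2 : 0 ≤ lam2) (i1 i2 : ℕ)
    (z1 z2 z3 : ℝ) (hz1 : 0 < z1) (hz2 : 0 < z2) (hz3 : 0 < z3) :
    HasSum
      (fun Δ : ℤ × ℤ × ℤ =>
        PintraA1 p1 p2 lam1 lam2 i1 i2 Δ * z1 ^ Δ.1 * z2 ^ Δ.2.1 * z3 ^ Δ.2.2)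
      (Real.exp (lam1 * (z1 - 1)) * Real.exp (lam2 * (z3 - 1)) *
        (d0 i2 p2 + d1 i2 p2 * z2⁻¹) * (d0 i1 p1 + d1 i1 p1 * z2 * z1⁻¹)) := by
  have hG0 := (hasSum_arr lam1 z1).mul_left (d0 i1 p1)
  have hG1 := (hasSum_arr_shift lam1 z1 hz1 1).mul_left (d1 i1 p1)
  have hH0 := ((hasSum_arr 0 z2).mul_left (d0 i2 p2)).add
    ((hasSum_arr_shift 0 z2 hz2 1).mul_left (d1 i2 p2))
  have hH1 := ((hasSum_arr_shift 0 z2 hz2 (-1)).mul_left (d0 i2 p2)).add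
    ((hasSum_arr 0 z2).mul_left (d1 i2 p2))
  have hG := (hasSum_mul_real hG0 hH0).add (hasSum_mul_real hG1 hH1)
  have hH := hasSum_mul_real hG (hasSum_arr lam2 z3)
  have final := ((Equiv.prodAssoc ℤ ℤ ℤ).symm.hasSum_iff).mpr hH
  convert final using 1
  · funext Δ
    simp only [Function.comp, Equiv.prodAssoc_symm_apply, PintraA1, Ptrans, sub_eq_add_neg]
    ring
  · simp only [zero_mul, Real.exp_zero, one_mul, mul_one, neg_neg, zpow_one, zpow_neg]
    field_simp
    try ring
end
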